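/- The map Φ_b^(t) is concave on diagonal psd matrices: for diagonal psd Λ₁, Λ₂ with positive traces and θ ∈ (0,1), θ Φ_b^(t)(Λ₁) + (1−θ) Φ_b^(t)(Λ₂) ⪯ Φ_b^(t)(θΛ₁ + (1−θ)Λ₂). -/

import Mathlib

open ComplexOrder

noncomputable def gfun (s x : ℝ) : ℝ := x - x^2 / s

lemma gfun_nonneg {s x : ℝ} (hs : 0 < s) (hx : 0 ≤ x) (hxs : x ≤ s) : 0 ≤ gfun s x := by
  unfold gfun
  rw [sub_nonneg, div_le_iff₀ hs]
  nlinarith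

lemma gfun_le {s x : ℝ} (hs : 0 < s) (hx : 0 ≤ x) (hxs : x ≤ s) : gfun s x ≤ s / 4 := by
  have h : x - x^2/s = (x*s - x^2)/s := by field_simp
  rw [gfun, h, div_le_div_iff₀ hs (by norm_num : (0:ℝ) < 4)]
  nlinarith [sq_nonneg (x - s/2)]

lemma gfun_mono1 {s s' x x' : ℝ} (hs : 0 < s) (hx : 0 ≤ x) (hxx : x ≤ x')
    (hxs : x ≤ s) (hδ : x' - x ≤ s' - s) : gfun s x ≤ gfun s' x' := by
  have hs' : 0 < s' := by linarith
  have h : x - x^2/s = (x*s - x^2)/s := by field_simp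
  have h' : x' - x'^2/s' = (x'*s' - x'^2)/s' := by field_simp
  rw [gfun, gfun, h, h', div_le_div_iff₀ hs hs']
  nlinarith [mul_nonneg (sub_nonneg.2 hxx) (sq_nonneg (s-x)),
    mul_nonneg (by linarith : (0:ℝ) ≤ s'-s-(x'-x))
      (by nlinarith : (0:ℝ) ≤ (x'-x)*s + x^2)]

lemma gfun_mono2 {s s' a a' : ℝ} (hs : 0 < s) (hss : s ≤ s') (ha : 0 ≤ a) (haa : a ≤ a')
    (h2a : 2*a ≤ s) (h2a' : 2*a' ≤ s') : gfun s a ≤ gfun s' a' := by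
  have hs' : 0 < s' := by linarith
  have h : a - a^2/s = (a*s - a^2)/s := by field_simp
  have h' : a' - a'^2/s' = (a'*s' - a'^2)/s' := by field_simp
  rw [gfun, gfun, h, h', div_le_div_iff₀ hs hs']
  nlinarith [mul_nonneg (sub_nonneg.2 haa) (by linarith : (0:ℝ) ≤ s' - a - a'),
    mul_nonneg (sub_nonneg.2 hss) (mul_nonneg ha (by linarith : (0:ℝ) ≤ s - a))]

lemma gfun_concave {s₁ s₂ x₁ x₂ θ : ℝ} (hs₁ : 0 < s₁) (hs₂ : 0 < s₂)
    (hx₁ : 0 ≤ x₁) (hx₂ : 0 ≤ x₂) (hθ0 : 0 < θ) (hθ1 : θ < 1) :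
    θ * gfun s₁ x₁ + (1-θ) * gfun s₂ x₂ ≤ gfun (θ*s₁+(1-θ)*s₂) (θ*x₁+(1-θ)*x₂) := by
  have h1θ : 0 < 1 - θ := by linarith
  have hsc : 0 < θ*s₁+(1-θ)*s₂ := by positivity
  have key : (θ*x₁+(1-θ)*x₂)^2 / (θ*s₁+(1-θ)*s₂) ≤ θ * (x₁^2/s₁) + (1-θ) * (x₂^2/s₂) := by
    have hr : θ * (x₁^2/s₁) + (1-θ) * (x₂^2/s₂)
        = (θ*x₁^2*s₂ + (1-θ)*x₂^2*s₁) / (s₁*s₂) := by field_simp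
    rw [hr, div_le_div_iff₀ hsc (by positivity)]
    nlinarith [mul_nonneg (mul_nonneg hθ0.le h1θ.le) (sq_nonneg (x₁*s₂ - x₂*s₁))]
  have e : gfun (θ*s₁+(1-θ)*s₂) (θ*x₁+(1-θ)*x₂)
      = θ*x₁+(1-θ)*x₂ - (θ*x₁+(1-θ)*x₂)^2/(θ*s₁+(1-θ)*s₂) := rfl
  rw [e, gfun, gfun]
  ring_nf
  ring_nf at key
  linarith

noncomputable def git (s : ℝ) (b : ℕ) (x : ℝ) : ℝ := (gfun s)^[b] x

lemma git_zero (s : ℝ) (b : ℕ) : git s b 0 = 0 := by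
  unfold git
  induction b with
  | zero => simp
  | succ k ih => rw [Function.iterate_succ_apply', ih]; simp [gfun]

lemma git_homog {s x : ℝ} {c : ℝ} (hc : 0 < c) (b : ℕ) :
    git (c*s) b (c*x) = c * git s b x := by
  unfold git
  induction b generalizing x with
  | zero => simp
  | succ k ih =>
      rw [Function.iterate_succ_apply, Function.iterate_succ_apply]
      rw [show gfun (c*s) (c*x) = c * gfun s x by
        unfold gfun
        rcases eq_or_ne s 0 with h | h
        · simp [h, mul_sub]
        · field_simp]
      exact ih

-- range invariant in [0, s/4] after ≥1 steps; state: for all b, stays in [0,s]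
lemma git_bounds {s x : ℝ} (hs : 0 < s) (hx : 0 ≤ x) (hxs : x ≤ s) (b : ℕ) :
    0 ≤ git s b x ∧ git s b x ≤ s := by
  unfold git
  induction b generalizing x with
  | zero => exact ⟨hx, hxs⟩
  | succ k ih =>
      rw [Function.iterate_succ_apply]
      exact ih (gfun_nonneg hs hx hxs) (le_trans (gfun_le hs hx hxs) (by linarith))

lemma git_succ' (s x : ℝ) (k : ℕ) : git s (k+1) x = gfun s (git s k x) :=
  Function.iterate_succ_apply' _ _ _

lemma git_succ (s x : ℝ) (k : ℕ) : git s (k+1) x = git s k (gfun s x) :=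
  Function.iterate_succ_apply _ _ _

lemma git_stay {s x : ℝ} (hs : 0 < s) (hx : 0 ≤ x) (hxs : x ≤ s/4) (k : ℕ) :
    0 ≤ git s k x ∧ git s k x ≤ s/4 := by
  induction k generalizing x with
  | zero => exact ⟨hx, hxs⟩
  | succ m ih =>
      rw [git_succ]
      exact ih (gfun_nonneg hs hx (by linarith)) (gfun_le hs hx (by linarith))

lemma git_le_quarter {s x : ℝ} (hs : 0 < s) (hx : 0 ≤ x) (hxs : x ≤ s) {b : ℕ} (hb : 1 ≤ b) :
    0 ≤ git s b x ∧ git s b x ≤ s/4 := by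
  obtain ⟨k, rfl⟩ := Nat.exists_eq_add_of_le hb
  rw [add_comm, git_succ]
  exact git_stay hs (gfun_nonneg hs hx hxs) (gfun_le hs hx hxs) k

-- monotone iterate on region 2a ≤ s
lemma git_mono_half {s s' a a' : ℝ} (hs : 0 < s) (hss : s ≤ s') (ha : 0 ≤ a) (haa : a ≤ a')
    (h2a : 2*a ≤ s) (h2a' : 2*a' ≤ s') (b : ℕ) : git s b a ≤ git s' b a' := by
  induction b generalizing a a' with
  | zero => exact haa
  | succ k ih =>
      rw [git_succ, git_succ]
      have hs' : 0 < s' := lt_of_lt_of_le hs hss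
      exact ih (gfun_nonneg hs ha (by linarith)) (gfun_mono2 hs hss ha haa h2a h2a')
        (by linarith [gfun_le hs ha (by linarith : a ≤ s)])
        (by linarith [gfun_le hs' (le_trans ha haa) (by linarith : a' ≤ s')])

lemma git_mono {s s' x x' : ℝ} (hs : 0 < s) (hx : 0 ≤ x) (hxx : x ≤ x')
    (hxs : x ≤ s) (hx's : x' ≤ s') (hδ : x' - x ≤ s' - s) {b : ℕ} (hb : 1 ≤ b) :
    git s b x ≤ git s' b x' := by
  obtain ⟨k, rfl⟩ := Nat.exists_eq_add_of_le hb
  rw [add_comm, git_succ, git_succ]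
  have hs' : 0 < s' := by linarith
  have h1 := gfun_nonneg hs hx hxs
  have h2 := gfun_le hs hx hxs
  have h1' := gfun_nonneg hs' (le_trans hx hxx) hx's
  have h2' := gfun_le hs' (le_trans hx hxx) hx's
  exact git_mono_half hs (by linarith) h1 (gfun_mono1 hs hx hxx hxs hδ)
    (by linarith) (by linarith) k

lemma git_concave {s₁ s₂ x₁ x₂ θ : ℝ} (hs₁ : 0 < s₁) (hs₂ : 0 < s₂)
    (hx₁ : 0 ≤ x₁) (hx₂ : 0 ≤ x₂) (hx₁s : x₁ ≤ s₁) (hx₂s : x₂ ≤ s₂)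
    (hθ0 : 0 < θ) (hθ1 : θ < 1) {b : ℕ} (hb : 1 ≤ b) :
    θ * git s₁ b x₁ + (1-θ) * git s₂ b x₂ ≤ git (θ*s₁+(1-θ)*s₂) b (θ*x₁+(1-θ)*x₂) := by
  have h1θ : 0 < 1 - θ := by linarith
  have hsc : 0 < θ*s₁+(1-θ)*s₂ := by positivity
  induction b with
  | zero => omega
  | succ k ih =>
      rcases Nat.eq_or_lt_of_le hb with h | h
      · have hk : k = 0 := by omega
        subst hk
        simpa [git] using gfun_concave hs₁ hs₂ hx₁ hx₂ hθ0 hθ1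
      · have hk : 1 ≤ k := by omega
        have IH := ih hk
        have B₁ := git_le_quarter hs₁ hx₁ hx₁s hk
        have B₂ := git_le_quarter hs₂ hx₂ hx₂s hk
        have Bc := git_le_quarter (x := θ*x₁+(1-θ)*x₂) hsc (by positivity)
          (by nlinarith) hk
        rw [git_succ', git_succ', git_succ']
        calc θ * gfun s₁ (git s₁ k x₁) + (1-θ) * gfun s₂ (git s₂ k x₂)
            ≤ gfun (θ*s₁+(1-θ)*s₂) (θ * git s₁ k x₁ + (1-θ) * git s₂ k x₂) :=
              gfun_concave hs₁ hs₂ B₁.1 B₂.1 hθ0 hθ1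
          _ ≤ gfun (θ*s₁+(1-θ)*s₂) (git (θ*s₁+(1-θ)*s₂) k (θ*x₁+(1-θ)*x₂)) := by
              apply gfun_mono2 hsc le_rfl (by nlinarith [B₁.1, B₂.1]) IH
              · nlinarith [B₁.2, B₂.2]
              · nlinarith [Bc.2]

variable {N : ℕ}

noncomputable def psiV (b : ℕ) (v : Fin N → ℝ) : Fin N → ℝ :=
  fun i => git (∑ j, v j) b (v i)

lemma sumNN {v : Fin N → ℝ} (hv : ∀ i, 0 ≤ v i) : 0 ≤ ∑ j, v j :=
  Finset.sum_nonneg fun j _ => hv j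

lemma le_sum' {v : Fin N → ℝ} (hv : ∀ i, 0 ≤ v i) (i : Fin N) : v i ≤ ∑ j, v j :=
  Finset.single_le_sum (fun j _ => hv j) (Finset.mem_univ i)

lemma eq_zero_of_sum_eq {v : Fin N → ℝ} (hv : ∀ i, 0 ≤ v i) (h : ∑ j, v j = 0) :
    ∀ i, v i = 0 := by
  intro i
  have := (Finset.sum_eq_zero_iff_of_nonneg (fun j _ => hv j)).1 h
  exact this i (Finset.mem_univ i)

lemma psiV_nonneg {b : ℕ} {v : Fin N → ℝ} (hv : ∀ i, 0 ≤ v i) : ∀ i, 0 ≤ psiV b v i := by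
  intro i
  rcases eq_or_lt_of_le (sumNN hv) with h | h
  · rw [psiV, ← h, eq_zero_of_sum_eq hv h.symm i, git_zero]
  · exact (git_bounds h (hv i) (le_sum' hv i) b).1

lemma psiV_homog {b : ℕ} {c : ℝ} (hc : 0 < c) (v : Fin N → ℝ) :
    psiV b (fun j => c * v j) = fun i => c * psiV b v i := by
  funext i
  rw [psiV, psiV, show ∑ j, c * v j = c * ∑ j, v j by rw [Finset.mul_sum], git_homog hc]

lemma psiV_mono {b : ℕ} (hb : 1 ≤ b) {v w : Fin N → ℝ} (hv : ∀ i, 0 ≤ v i)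
    (hw : ∀ i, 0 ≤ w i) (hvw : ∀ i, v i ≤ w i) : ∀ i, psiV b v i ≤ psiV b w i := by
  intro i
  rcases eq_or_lt_of_le (sumNN hv) with h | h
  · have h0 := eq_zero_of_sum_eq hv h.symm
    have : psiV b v i = 0 := by rw [psiV, ← h, h0 i, git_zero]
    rw [this]
    exact psiV_nonneg hw i
  · apply git_mono h (hv i) (hvw i) (le_sum' hv i) (le_sum' hw i) _ hb
    have h1 : ∑ j ∈ Finset.univ.erase i, v j ≤ ∑ j ∈ Finset.univ.erase i, w j :=
      Finset.sum_le_sum fun j _ => hvw j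
    have h2 : ∑ j ∈ Finset.univ.erase i, v j + v i = ∑ j, v j :=
      Finset.sum_erase_add _ _ (Finset.mem_univ i)
    have h3 : ∑ j ∈ Finset.univ.erase i, w j + w i = ∑ j, w j :=
      Finset.sum_erase_add _ _ (Finset.mem_univ i)
    linarith

lemma psiV_concave {b : ℕ} (hb : 1 ≤ b) {v w : Fin N → ℝ} (hv : ∀ i, 0 ≤ v i)
    (hw : ∀ i, 0 ≤ w i) {θ : ℝ} (hθ0 : 0 < θ) (hθ1 : θ < 1) : ∀ i,
    θ * psiV b v i + (1-θ) * psiV b w i ≤ psiV b (fun j => θ * v j + (1-θ) * w j) i := by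
  intro i
  have h1θ : 0 < 1 - θ := by linarith
  have hsum : ∑ j, (θ * v j + (1-θ) * w j) = θ * ∑ j, v j + (1-θ) * ∑ j, w j := by
    rw [Finset.sum_add_distrib, Finset.mul_sum, Finset.mul_sum]
  rcases eq_or_lt_of_le (sumNN hv) with h | h
  · have h0 := eq_zero_of_sum_eq hv h.symm
    have hv0 : psiV b v i = 0 := by rw [psiV, ← h, h0 i, git_zero]
    have : (fun j => θ * v j + (1-θ) * w j) = (fun j => (1-θ) * w j) := by
      funext j; rw [h0 j]; ring
    rw [this, psiV_homog h1θ, hv0]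
    simp
  rcases eq_or_lt_of_le (sumNN hw) with h' | h'
  · have h0 := eq_zero_of_sum_eq hw h'.symm
    have hw0 : psiV b w i = 0 := by rw [psiV, ← h', h0 i, git_zero]
    have : (fun j => θ * v j + (1-θ) * w j) = (fun j => θ * v j) := by
      funext j; rw [h0 j]; ring
    rw [this, psiV_homog hθ0, hw0]
    simp
  · rw [psiV, psiV, psiV, hsum]
    exact git_concave h h' (hv i) (hw i) (le_sum' hv i) (le_sum' hw i) hθ0 hθ1 hb

lemma psiV_iter_nonneg {b t : ℕ} {v : Fin N → ℝ} (hv : ∀ i, 0 ≤ v i) :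
    ∀ i, 0 ≤ (psiV b)^[t] v i := by
  induction t generalizing v with
  | zero => exact hv
  | succ k ih => rw [Function.iterate_succ_apply]; exact ih (psiV_nonneg hv)

lemma psiV_iter_concave {b : ℕ} (hb : 1 ≤ b) (t : ℕ) {v w : Fin N → ℝ}
    (hv : ∀ i, 0 ≤ v i) (hw : ∀ i, 0 ≤ w i) {θ : ℝ} (hθ0 : 0 < θ) (hθ1 : θ < 1) : ∀ i,
    θ * (psiV b)^[t] v i + (1-θ) * (psiV b)^[t] w i
      ≤ (psiV b)^[t] (fun j => θ * v j + (1-θ) * w j) i := by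
  induction t with
  | zero => intro i; exact le_of_eq rfl
  | succ k ih =>
      intro i
      rw [Function.iterate_succ_apply', Function.iterate_succ_apply',
        Function.iterate_succ_apply']
      have hVk := psiV_iter_nonneg (b := b) (t := k) hv
      have hWk := psiV_iter_nonneg (b := b) (t := k) hw
      have hmix : ∀ j, 0 ≤ θ * (psiV b)^[k] v j + (1-θ) * (psiV b)^[k] w j := by
        intro j
        have := hVk j; have := hWk j
        nlinarith
      have hmono := psiV_mono hb hmix
        (psiV_iter_nonneg (fun j => by
          have := hv j; have := hw j; nlinarith)) ih i
      calc θ * psiV b ((psiV b)^[k] v) i + (1-θ) * psiV b ((psiV b)^[k] w) i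
          ≤ psiV b (fun j => θ * (psiV b)^[k] v j + (1-θ) * (psiV b)^[k] w j) i :=
            psiV_concave hb hVk hWk hθ0 hθ1 i
        _ ≤ psiV b ((psiV b)^[k] fun j => θ * v j + (1-θ) * w j) i := hmono

noncomputable def PhiB {N : ℕ} (b : ℕ) (M : Matrix (Fin N) (Fin N) ℂ) :
    Matrix (Fin N) (Fin N) ℂ :=
  (fun X : Matrix (Fin N) (Fin N) ℂ => X - (Matrix.trace M)⁻¹ • X ^ 2)^[b] M

variable {N : ℕ}

lemma diag_step (c : ℂ) (f : Fin N → ℂ) :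
    Matrix.diagonal f - c • (Matrix.diagonal f)^2
      = Matrix.diagonal (fun i => f i - c * f i ^ 2) := by
  rw [sq, Matrix.diagonal_mul_diagonal]
  ext i j
  by_cases h : i = j <;>
    simp [h, Matrix.sub_apply, Matrix.smul_apply, Matrix.diagonal_apply_ne, sq]

lemma diag_iter (c : ℂ) (f : Fin N → ℂ) (k : ℕ) :
    (fun X : Matrix (Fin N) (Fin N) ℂ => X - c • X^2)^[k] (Matrix.diagonal f)
      = Matrix.diagonal (fun i => (fun x : ℂ => x - c * x^2)^[k] (f i)) := by
  induction k with
  | zero => simp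
  | succ m ih =>
      rw [Function.iterate_succ_apply', ih]
      simp only [Function.iterate_succ_apply']
      exact diag_step c _

lemma scalar_cast (s : ℝ) (k : ℕ) (x : ℝ) :
    (fun z : ℂ => z - ((s : ℂ))⁻¹ * z^2)^[k] ((x : ℝ) : ℂ) = ((git s k x : ℝ) : ℂ) := by
  induction k generalizing x with
  | zero => simp [git]
  | succ m ih =>
      rw [Function.iterate_succ_apply, git_succ]
      rw [show ((x:ℂ) - (↑s)⁻¹ * (x:ℂ)^2) = ((gfun s x : ℝ) : ℂ) by
        unfold gfun; push_cast; ring]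
      exact ih _

lemma PhiB_diagonal (b : ℕ) (v : Fin N → ℝ) :
    PhiB b (Matrix.diagonal (fun i => ((v i : ℝ) : ℂ)))
      = Matrix.diagonal (fun i => ((psiV b v i : ℝ) : ℂ)) := by
  unfold PhiB
  rw [Matrix.trace_diagonal]
  rw [show ∑ i, ((v i : ℝ) : ℂ) = ((∑ i, v i : ℝ) : ℂ) by push_cast; ring]
  rw [diag_iter]
  have : (fun i => (fun x : ℂ => x - ((((∑ i, v i : ℝ)) : ℂ))⁻¹ * x^2)^[b] ((v i : ℝ) : ℂ))
      = fun i => ((git (∑ i, v i) b (v i) : ℝ) : ℂ) := funext fun i => scalar_cast _ _ _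
  rw [this]
  rfl

lemma PhiB_iter_diagonal (b t : ℕ) (v : Fin N → ℝ) :
    (PhiB b)^[t] (Matrix.diagonal (fun i => ((v i : ℝ) : ℂ)))
      = Matrix.diagonal (fun i => (((psiV b)^[t] v i : ℝ) : ℂ)) := by
  induction t generalizing v with
  | zero => simp
  | succ m ih =>
      rw [Function.iterate_succ_apply, Function.iterate_succ_apply, PhiB_diagonal, ih]

lemma diag_repr {N : ℕ} {Λ : Matrix (Fin N) (Fin N) ℂ} (hd : Λ.IsDiag) (h : Λ.PosSemidef) :
    (∀ i, 0 ≤ (Λ i i).re) ∧ Λ = Matrix.diagonal (fun i => (((Λ i i).re : ℝ) : ℂ)) := by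
  have hrep : Matrix.diagonal Λ.diag = Λ := hd.diagonal_diag
  have hpos : ∀ i, 0 ≤ Λ.diag i := by
    rw [← hrep] at h
    exact Matrix.posSemidef_diagonal_iff.1 h
  have hre : ∀ i, Λ i i = (((Λ i i).re : ℝ) : ℂ) := by
    intro i
    have := (Complex.le_def.1 (hpos i)).2
    apply Complex.ext
    · simp
    · simpa using this.symm
  constructor
  · intro i
    exact (Complex.le_def.1 (hpos i)).1
  · ext i j
    by_cases h : i = j
    · subst h
      simpa using hre i
    · simp [Matrix.diagonal_apply_ne _ h, hd h]

theorem PhiB_iter_concave {N : ℕ} (b t : ℕ) (hb : 1 ≤ b) (ht : 1 ≤ t)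
    (Λ₁ Λ₂ : Matrix (Fin N) (Fin N) ℂ)
    (hd₁ : Λ₁.IsDiag) (hd₂ : Λ₂.IsDiag)
    (h₁ : Λ₁.PosSemidef) (h₂ : Λ₂.PosSemidef)
    (ht₁ : 0 < (Matrix.trace Λ₁).re) (ht₂ : 0 < (Matrix.trace Λ₂).re)
    (θ : ℝ) (hθ0 : 0 < θ) (hθ1 : θ < 1) :
    ((PhiB b)^[t] ((θ : ℂ) • Λ₁ + ((1 : ℂ) - θ) • Λ₂)
      - ((θ : ℂ) • (PhiB b)^[t] Λ₁ + ((1 : ℂ) - θ) • (PhiB b)^[t] Λ₂)).PosSemidef := by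
  obtain ⟨hp₁, he₁⟩ := diag_repr hd₁ h₁
  obtain ⟨hp₂, he₂⟩ := diag_repr hd₂ h₂
  set d₁ : Fin N → ℝ := fun i => (Λ₁ i i).re with hd₁'
  set d₂ : Fin N → ℝ := fun i => (Λ₂ i i).re with hd₂'
  have hmix : (θ : ℂ) • Λ₁ + ((1 : ℂ) - θ) • Λ₂
      = Matrix.diagonal (fun i => ((θ * d₁ i + (1-θ) * d₂ i : ℝ) : ℂ)) := by
    rw [he₁, he₂]
    ext i j
    by_cases h : i = j <;>
      simp [h, Matrix.add_apply, Matrix.smul_apply, Matrix.diagonal_apply_ne, smul_eq_mul, hd₁', hd₂']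
  rw [hmix, he₁, he₂, PhiB_iter_diagonal, PhiB_iter_diagonal, PhiB_iter_diagonal]
  have hdiff : Matrix.diagonal (fun i => (((psiV b)^[t] (fun j => θ * d₁ j + (1-θ) * d₂ j) i : ℝ) : ℂ))
      - ((θ : ℂ) • Matrix.diagonal (fun i => (((psiV b)^[t] d₁ i : ℝ) : ℂ))
        + ((1 : ℂ) - θ) • Matrix.diagonal (fun i => (((psiV b)^[t] d₂ i : ℝ) : ℂ)))
      = Matrix.diagonal (fun i => (((psiV b)^[t] (fun j => θ * d₁ j + (1-θ) * d₂ j) i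
          - (θ * (psiV b)^[t] d₁ i + (1-θ) * (psiV b)^[t] d₂ i) : ℝ) : ℂ)) := by
    ext i j
    by_cases h : i = j <;>
      simp [h, Matrix.sub_apply, Matrix.add_apply, Matrix.smul_apply,
        Matrix.diagonal_apply_ne, smul_eq_mul]
  rw [hdiff]
  apply Matrix.posSemidef_diagonal_iff.2
  intro i
  rw [Complex.zero_le_real, sub_nonneg]
  exact psiV_iter_concave hb t hp₁ hp₂ hθ0 hθ1 i
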